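/- The total area of all Dyck paths of length 2k is A_k = 4^k − binomial(2k+1, k). -/

import Mathlib

open Finset
open scoped Classical

/-- The height of a `±1`-path (encoded by `f : Fin m → Bool`, `true` = up-step)
after its first `i` steps. -/
def ht {m : ℕ} (f : Fin m → Bool) (i : ℕ) : ℤ :=
  ∑ j ∈ Finset.univ.filter (fun j : Fin m => (j : ℕ) < i),
    (if f j then (1 : ℤ) else -1)

/-- `f` is a Dyck path: it stays nonnegative and ends at height `0`. -/
def IsDyck {m : ℕ} (f : Fin m → Bool) : Prop :=
  (∀ i : ℕ, i ≤ m → 0 ≤ ht f i) ∧ ht f m = 0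

/-- The area under a path: the sum of its heights after each step. -/
def area {m : ℕ} (f : Fin m → Bool) : ℤ :=
  ∑ i ∈ Finset.range m, ht f (i+1)

/-- The set of all Dyck paths of length `2k`. -/
noncomputable def dyckSet (k : ℕ) : Finset (Fin (2*k) → Bool) :=
  Finset.univ.filter (fun f => IsDyck f)

/-- The total area `A_k` under all Dyck paths of length `2k`. -/
noncomputable def totalArea (k : ℕ) : ℤ :=
  ∑ f ∈ dyckSet k, area f

namespace DyckAux

def step (b : Bool) : ℤ := if b then 1 else -1

lemma ht_def {m : ℕ} (f : Fin m → Bool) (i : ℕ) :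
    ht f i = ∑ j ∈ Finset.univ.filter (fun j : Fin m => (j : ℕ) < i), step (f j) := rfl

lemma filter_eq_univ {m i : ℕ} (h : m ≤ i) :
    (Finset.univ.filter (fun j : Fin m => (j : ℕ) < i)) = (Finset.univ : Finset (Fin m)) := by
  ext j
  simp only [Finset.mem_filter, Finset.mem_univ, true_and, iff_true]
  exact lt_of_lt_of_le j.isLt h

lemma ht_zero {m : ℕ} (f : Fin m → Bool) : ht f 0 = 0 := by
  rw [ht_def]
  convert Finset.sum_empty
  ext j
  simp

lemma ht_snoc_le {n : ℕ} (g : Fin n → Bool) (b : Bool) {i : ℕ} (hi : i ≤ n) :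
    ht (Fin.snoc g b) i = ht g i := by
  rw [ht_def, ht_def]
  have hset : (Finset.univ.filter (fun j : Fin (n+1) => (j : ℕ) < i))
      = (Finset.univ.filter (fun j : Fin n => (j : ℕ) < i)).map Fin.castSuccEmb := by
    ext j
    simp only [Finset.mem_map, Finset.mem_filter, Finset.mem_univ, true_and]
    constructor
    · intro hj
      refine ⟨⟨j.1, by omega⟩, hj, ?_⟩
      ext
      simp [Fin.castSuccEmb]
    · rintro ⟨a, ha, rfl⟩
      simpa [Fin.castSuccEmb] using ha
  rw [hset, Finset.sum_map]
  apply Finset.sum_congr rfl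
  intro j _
  have : (Fin.castSuccEmb j : Fin (n+1)) = Fin.castSucc j := rfl
  rw [this, Fin.snoc_castSucc]

lemma ht_snoc_top {n : ℕ} (g : Fin n → Bool) (b : Bool) :
    ht (Fin.snoc g b) (n+1) = ht g n + step b := by
  rw [ht_def, ht_def, filter_eq_univ (le_refl (n+1)), filter_eq_univ (le_refl n),
    Fin.sum_univ_castSucc]
  simp [Fin.snoc_castSucc, Fin.snoc_last]

lemma ht_parity {n : ℕ} (f : Fin n → Bool) : (2:ℤ) ∣ ((n : ℤ) + ht f n) := by
  rw [ht_def, filter_eq_univ (le_refl n)]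
  have : ∑ j : Fin n, step (f j)
      = 2 * (∑ j : Fin n, (if f j then (1:ℤ) else 0)) - n := by
    rw [Finset.mul_sum]
    have h1 : ∀ b, step b = 2 * (if b then (1:ℤ) else 0) - 1 := by
      intro b; cases b <;> simp [step]
    calc ∑ j : Fin n, step (f j) = ∑ j : Fin n, (2 * (if f j then (1:ℤ) else 0) - 1) :=
          Finset.sum_congr rfl (fun j _ => h1 (f j))
      _ = (∑ j : Fin n, (2 * (if f j then (1:ℤ) else 0))) - (∑ _j : Fin n, (1:ℤ)) :=
          Finset.sum_sub_distrib _ _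
      _ = (∑ j : Fin n, (2 * (if f j then (1:ℤ) else 0))) - n := by
          simp [Finset.sum_const]
  rw [this]
  exact ⟨∑ j : Fin n, (if f j then (1:ℤ) else 0), by ring⟩

noncomputable def W (n : ℕ) (h : ℤ) : Finset (Fin n → Bool) :=
  Finset.univ.filter (fun f => (∀ i ≤ n, 0 ≤ ht f i) ∧ ht f n = h)

noncomputable def cnt (n : ℕ) (h : ℤ) : ℤ := (W n h).card
noncomputable def ar (n : ℕ) (h : ℤ) : ℤ := ∑ f ∈ W n h, area f

lemma W_neg {n : ℕ} {h : ℤ} (hh : h < 0) : W n h = ∅ := by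
  rw [Finset.eq_empty_iff_forall_notMem]
  intro f hf
  rw [W, Finset.mem_filter] at hf
  have h1 := hf.2.1 n le_rfl
  have h2 := hf.2.2
  omega

lemma cnt_neg {n : ℕ} {h : ℤ} (hh : h < 0) : cnt n h = 0 := by
  rw [cnt, W_neg hh]; simp

lemma ar_neg {n : ℕ} {h : ℤ} (hh : h < 0) : ar n h = 0 := by
  rw [ar, W_neg hh]; simp

lemma W_not_parity {n : ℕ} {h : ℤ} (hp : ¬ (2:ℤ) ∣ ((n : ℤ) + h)) : W n h = ∅ := by
  rw [Finset.eq_empty_iff_forall_notMem]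
  intro f hf
  rw [W, Finset.mem_filter] at hf
  exact hp (hf.2.2 ▸ ht_parity f)

lemma mem_W_snoc {n : ℕ} {h : ℤ} (hh : 0 ≤ h) (g : Fin n → Bool) (b : Bool) :
    (Fin.snoc g b ∈ W (n+1) h) ↔ g ∈ W n (h - step b) := by
  simp only [W, Finset.mem_filter, Finset.mem_univ, true_and]
  constructor
  · rintro ⟨h1, h2⟩
    refine ⟨fun i hi => by rw [← ht_snoc_le g b hi]; exact h1 i (by omega), ?_⟩
    have h3 := ht_snoc_top g b
    rw [h2] at h3
    linarith
  · rintro ⟨h1, h2⟩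
    constructor
    · intro i hi
      rcases Nat.lt_or_ge i (n+1) with hi' | hi'
      · rw [ht_snoc_le g b (by omega)]
        exact h1 i (by omega)
      · have : i = n + 1 := by omega
        subst this
        rw [ht_snoc_top, h2]
        linarith
    · rw [ht_snoc_top, h2]; ring

lemma area_snoc {n : ℕ} (g : Fin n → Bool) (b : Bool) :
    area (Fin.snoc g b) = area g + ht (Fin.snoc g b) (n+1) := by
  unfold area
  rw [Finset.sum_range_succ]
  congr 1
  apply Finset.sum_congr rfl
  intro i hi
  rw [Finset.mem_range] at hi
  exact ht_snoc_le g b (by omega)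

noncomputable def snocEmb (n : ℕ) (b : Bool) : (Fin n → Bool) ↪ (Fin (n+1) → Bool) :=
  ⟨fun g => Fin.snoc g b, by
    intro g g' hgg
    funext j
    have := congrFun hgg (Fin.castSucc j)
    simpa [Fin.snoc_castSucc] using this⟩

lemma W_succ {n : ℕ} {h : ℤ} (hh : 0 ≤ h) :
    W (n+1) h = ((W n (h-1)).map (snocEmb n true)) ∪ ((W n (h+1)).map (snocEmb n false)) := by
  ext f
  simp only [Finset.mem_union, Finset.mem_map, snocEmb, Function.Embedding.coeFn_mk]
  constructor
  · intro hf
    have hrep : Fin.snoc (Fin.init f) (f (Fin.last n)) = f := Fin.snoc_init_self f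
    rcases Bool.eq_false_or_eq_true (f (Fin.last n)) with hb | hb <;> rw [hb] at hrep
    · left
      refine ⟨Fin.init f, ?_, hrep⟩
      have h2 : h - 1 = h - step true := by simp [step]
      rw [h2, ← mem_W_snoc hh (Fin.init f) true, hrep]
      exact hf
    · right
      refine ⟨Fin.init f, ?_, hrep⟩
      have h2 : h + 1 = h - step false := by simp [step]
      rw [h2, ← mem_W_snoc hh (Fin.init f) false, hrep]
      exact hf
  · rintro (⟨g, hg, rfl⟩ | ⟨g, hg, rfl⟩) <;> refine (mem_W_snoc hh g _).2 ?_
    · simpa [step] using hg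
    · simpa [step] using hg

lemma W_disj {n : ℕ} {h : ℤ} :
    Disjoint ((W n (h-1)).map (snocEmb n true)) ((W n (h+1)).map (snocEmb n false)) := by
  rw [Finset.disjoint_left]
  rintro f hf1 hf2
  rw [Finset.mem_map] at hf1 hf2
  obtain ⟨g, _, rfl⟩ := hf1
  obtain ⟨g', _, he⟩ := hf2
  have := congrFun he (Fin.last n)
  change (Fin.snoc g' false : Fin (n+1) → Bool) (Fin.last n) = (Fin.snoc g true : Fin (n+1) → Bool) (Fin.last n) at this
  simp [Fin.snoc_last] at this

lemma cnt_succ {n : ℕ} {h : ℤ} (hh : 0 ≤ h) :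
    cnt (n+1) h = cnt n (h-1) + cnt n (h+1) := by
  rw [cnt, W_succ hh, Finset.card_union_of_disjoint W_disj, Finset.card_map, Finset.card_map]
  push_cast
  rfl

lemma sum_area_W {n : ℕ} (h' : ℤ) (b : Bool) :
    ∑ f ∈ (W n h').map (snocEmb n b), area f = ar n h' + (h' + step b) * cnt n h' := by
  rw [Finset.sum_map]
  have : ∀ g ∈ W n h', area ((snocEmb n b) g) = area g + (h' + step b) := by
    intro g hg
    rw [W, Finset.mem_filter] at hg
    show area (Fin.snoc g b) = _
    rw [area_snoc, ht_snoc_top, hg.2.2]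
  rw [Finset.sum_congr rfl this, Finset.sum_add_distrib, Finset.sum_const, nsmul_eq_mul]
  rw [ar, cnt]
  ring

lemma ar_succ {n : ℕ} {h : ℤ} (hh : 0 ≤ h) :
    ar (n+1) h = ar n (h-1) + h * cnt n (h-1) + ar n (h+1) + h * cnt n (h+1) := by
  rw [ar, W_succ hh, Finset.sum_union W_disj, sum_area_W, sum_area_W]
  have h1 : h - 1 + step true = h := by simp [step]
  have h2 : h + 1 + step false = h := by simp [step]
  rw [h1, h2]
  ring

noncomputable def ich (n : ℕ) (k : ℤ) : ℤ := if k < 0 then 0 else (n.choose k.toNat : ℤ)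

lemma ich_neg {n : ℕ} {k : ℤ} (hk : k < 0) : ich n k = 0 := by simp [ich, hk]

lemma ich_of_gt {n : ℕ} {k : ℤ} (hk : (n : ℤ) < k) : ich n k = 0 := by
  rw [ich, if_neg (by omega)]
  have : n < k.toNat := by omega
  simp [Nat.choose_eq_zero_of_lt this]

lemma ich_pascal (n : ℕ) (k : ℤ) : ich (n+1) k = ich n k + ich n (k-1) := by
  rcases lt_trichotomy k 0 with hk | hk | hk
  · rw [ich_neg hk, ich_neg hk, ich_neg (by omega)]
    ring
  · subst hk
    rw [ich_neg (by norm_num : (0:ℤ) - 1 < 0)]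
    simp [ich]
  · obtain ⟨j, rfl⟩ : ∃ j : ℕ, k = (j : ℤ) + 1 := ⟨(k-1).toNat, by omega⟩
    rw [ich, ich, ich, if_neg (by omega), if_neg (by omega), if_neg (by omega)]
    have h1 : ((j : ℤ) + 1).toNat = j + 1 := by omega
    have h2 : ((j : ℤ) + 1 - 1).toNat = j := by omega
    rw [h1, h2, Nat.choose_succ_succ]
    push_cast
    ring

lemma ich_symm (n : ℕ) (k : ℤ) : ich n k = ich n ((n : ℤ) - k) := by
  rcases lt_trichotomy k 0 with hk | hk | hk
  · rw [ich_neg hk, ich_of_gt (by omega)]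
  · subst hk
    rw [ich, ich, if_neg (by omega), if_neg (by omega)]
    have h1 : ((n:ℤ) - 0).toNat = n := by omega
    have h2 : (0:ℤ).toNat = 0 := rfl
    rw [h1, h2, Nat.choose_self, Nat.choose_zero_right]
  · rcases le_or_gt k n with hk2 | hk2
    · rw [ich, ich, if_neg (by omega), if_neg (by omega)]
      have h1 : ((n : ℤ) - k).toNat = n - k.toNat := by omega
      rw [h1]
      have h2 : k.toNat ≤ n := by omega
      rw [Nat.choose_symm h2]
    · rw [ich_of_gt hk2, ich_neg (by omega)]

lemma Icc_eq_insert_left {a b : ℤ} (hab : a ≤ b) :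
    Finset.Icc a b = insert a (Finset.Icc (a+1) b) := by
  ext x
  simp only [Finset.mem_Icc, Finset.mem_insert]
  omega

lemma Icc_eq_insert_right {a b : ℤ} (hab : a ≤ b) :
    Finset.Icc a b = insert b (Finset.Icc a (b-1)) := by
  ext x
  simp only [Finset.mem_Icc, Finset.mem_insert]
  omega

lemma sum_ich_insert_left {n : ℕ} {a b : ℤ} (hab : a ≤ b) :
    ∑ s ∈ Finset.Icc a b, ich n s = ich n a + ∑ s ∈ Finset.Icc (a+1) b, ich n s := by
  rw [Icc_eq_insert_left hab, Finset.sum_insert (by simp)]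

lemma sum_ich_insert_right {n : ℕ} {a b : ℤ} (hab : a ≤ b) :
    ∑ s ∈ Finset.Icc a b, ich n s = (∑ s ∈ Finset.Icc a (b-1), ich n s) + ich n b := by
  rw [Icc_eq_insert_right hab, Finset.sum_insert (by simp)]
  ring

lemma sum_ich_shift (n : ℕ) (a b : ℤ) :
    ∑ s ∈ Finset.Icc a b, ich n (s-1) = ∑ s ∈ Finset.Icc (a-1) (b-1), ich n s := by
  rw [show Finset.Icc (a-1) (b-1) = (Finset.Icc a b).map (addRightEmbedding (-1)) by
    rw [Finset.map_add_right_Icc]; ring_nf]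
  rw [Finset.sum_map]
  apply Finset.sum_congr rfl
  intro s _
  simp [addRightEmbedding]
  ring_nf

lemma sum_ich_pascal (n : ℕ) (a b : ℤ) :
    ∑ s ∈ Finset.Icc a b, ich (n+1) s
      = (∑ s ∈ Finset.Icc a b, ich n s) + ∑ s ∈ Finset.Icc (a-1) (b-1), ich n s := by
  rw [← sum_ich_shift, ← Finset.sum_add_distrib]
  apply Finset.sum_congr rfl
  intro s _
  exact ich_pascal n s

noncomputable def pf (n : ℕ) (h : ℤ) : ℤ :=
  if 2 ∣ ((n:ℤ) + h) then ich n (((n:ℤ) + h)/2) - ich n (((n:ℤ) + h)/2 + 1) else 0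

noncomputable def qf2 (n : ℕ) (h : ℤ) : ℤ :=
  if 2 ∣ ((n:ℤ) + h) then
    (h+1) * 2^(n+1)
      - (h+1) * (∑ s ∈ Finset.Icc ((n:ℤ) - ((n:ℤ)+h)/2) (((n:ℤ)+h)/2 + 1), ich (n+1) s)
      + h*(h+1) * ich (n+1) ((n:ℤ) - ((n:ℤ)+h)/2)
  else 0

lemma ht_fin0 (f : Fin 0 → Bool) (i : ℕ) : ht f i = 0 := by
  rw [ht_def]
  simp

lemma area_fin0 (f : Fin 0 → Bool) : area f = 0 := by
  rw [area]
  simp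

lemma main (n : ℕ) : ∀ h : ℤ, -1 ≤ h → cnt n h = pf n h ∧ 2 * ar n h = qf2 n h := by
  induction n with
  | zero =>
    intro h hh
    rcases lt_trichotomy h 0 with h0 | h0 | h0
    · have hm : h = -1 := by omega
      subst hm
      refine ⟨?_, ?_⟩
      · rw [cnt_neg (by norm_num), pf, if_neg (by omega)]
      · rw [ar_neg (by norm_num), qf2, if_neg (by omega)]
        ring
    · subst h0
      have hW : W 0 (0:ℤ) = Finset.univ := by
        apply Finset.eq_univ_of_forall
        intro f
        rw [W, Finset.mem_filter]
        exact ⟨Finset.mem_univ f,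
          fun i _ => le_of_eq (ht_fin0 f i).symm, ht_fin0 f 0⟩
      constructor
      · rw [cnt, hW, pf, if_pos (by omega)]
        have d1 : (((0:ℕ):ℤ) + 0)/2 = 0 := by norm_num
        rw [d1]
        rw [ich_of_gt (by norm_num : ((0:ℕ):ℤ) < 0 + 1)]
        have : (Finset.univ : Finset (Fin 0 → Bool)).card = 1 := by
          rw [Finset.card_univ]
          simp
        rw [this]
        simp [ich]
      · rw [ar, hW, qf2, if_pos (by omega)]
        have hz : ∀ f ∈ (Finset.univ : Finset (Fin 0 → Bool)), area f = 0 :=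
          fun f _ => area_fin0 f
        rw [Finset.sum_congr rfl hz, Finset.sum_const]
        have d1 : (((0:ℕ):ℤ) + 0)/2 = 0 := by norm_num
        rw [d1]
        have : Finset.Icc (((0:ℕ):ℤ) - 0) ((0:ℤ) + 1) = Finset.Icc (0:ℤ) 1 := by norm_num
        rw [this, sum_ich_insert_left (by norm_num : (0:ℤ) ≤ 1)]
        have : Finset.Icc ((0:ℤ)+1) 1 = {(1:ℤ)} := by
          ext x; simp only [Finset.mem_Icc, Finset.mem_singleton]; omega
        rw [this, Finset.sum_singleton]
        have i1 : ich 1 0 = 1 := by simp [ich]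
        have i2 : ich 1 1 = 1 := by simp [ich]
        rw [i1, i2]
        ring
    · -- n = 0, h > 0
      have hW : W 0 h = ∅ := by
        rw [Finset.eq_empty_iff_forall_notMem]
        intro f hf
        rw [W, Finset.mem_filter] at hf
        have := hf.2.2
        rw [ht_fin0 f 0] at this
        omega
      have hc : cnt 0 h = 0 := by rw [cnt, hW]; simp
      have ha : ar 0 h = 0 := by rw [ar, hW]; simp
      by_cases hpar : (2:ℤ) ∣ (((0:ℕ):ℤ) + h)
      · obtain ⟨t, ht2⟩ := hpar
        have htpos : 1 ≤ t := by omega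
        have d1 : (((0:ℕ):ℤ) + h)/2 = t := by omega
        constructor
        · rw [hc, pf, if_pos ⟨t, ht2⟩, d1,
            ich_of_gt (by omega : ((0:ℕ):ℤ) < t),
            ich_of_gt (by omega : ((0:ℕ):ℤ) < t + 1)]
          ring
        · rw [ha, qf2, if_pos ⟨t, ht2⟩, d1]
          have hsub : Finset.Icc (0:ℤ) 1 ⊆ Finset.Icc (((0:ℕ):ℤ) - t) (t + 1) := by
            intro x hx
            simp only [Finset.mem_Icc] at hx ⊢
            omega
          have hout : ∀ x ∈ Finset.Icc (((0:ℕ):ℤ) - t) (t + 1),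
              x ∉ Finset.Icc (0:ℤ) 1 → ich 1 x = 0 := by
            intro x hx hnx
            simp only [Finset.mem_Icc] at hx hnx
            rcases lt_or_ge x 0 with hx0 | hx0
            · exact ich_neg hx0
            · exact ich_of_gt (by omega)
          rw [← Finset.sum_subset hsub hout]
          rw [sum_ich_insert_left (by norm_num : (0:ℤ) ≤ 1)]
          have heq : Finset.Icc ((0:ℤ)+1) 1 = {(1:ℤ)} := by
            ext x; simp only [Finset.mem_Icc, Finset.mem_singleton]; omega
          rw [heq, Finset.sum_singleton]
          have i1 : ich 1 0 = 1 := by simp [ich]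
          have i2 : ich 1 1 = 1 := by simp [ich]
          rw [i1, i2, ich_neg (by omega : ((0:ℕ):ℤ) - t < 0)]
          ring
      · rw [hc, ha, pf, if_neg hpar, qf2, if_neg hpar]
        exact ⟨rfl, by ring⟩
  | succ n IH =>
    intro h hh
    rcases lt_or_ge h 0 with h0 | h0
    · -- h = -1
      have hm : h = -1 := by omega
      subst hm
      constructor
      · rw [cnt_neg (by norm_num), pf]
        by_cases hpar : (2:ℤ) ∣ (((n+1:ℕ):ℤ) + (-1))
        · rw [if_pos hpar]
          obtain ⟨t, ht2⟩ := hpar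
          have d1 : ((((n+1:ℕ)):ℤ) + (-1))/2 = t := by omega
          rw [d1]
          have hsymm := ich_symm (n+1) (t+1)
          have e1 : ((n+1:ℕ):ℤ) - (t+1) = t := by push_cast at ht2 ⊢; omega
          rw [e1] at hsymm
          rw [hsymm]
          ring
        · rw [if_neg hpar]
      · rw [ar_neg (by norm_num), qf2]
        by_cases hpar : (2:ℤ) ∣ (((n+1:ℕ):ℤ) + (-1))
        · rw [if_pos hpar]; ring
        · rw [if_neg hpar]; ring
    · -- 0 ≤ h
      by_cases hpar : (2:ℤ) ∣ (((n+1:ℕ):ℤ) + h)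
      case neg =>
        constructor
        · rw [cnt, W_not_parity hpar, pf, if_neg hpar]
          simp
        · rw [ar, W_not_parity hpar, qf2, if_neg hpar]
          simp
      case pos =>
        obtain ⟨t, ht2⟩ := hpar
        have ht2' : ((n:ℤ) + 1 + h) = 2*t := by push_cast at ht2; omega
        have hpar0 : (2:ℤ) ∣ (((n+1:ℕ):ℤ) + h) := ⟨t, ht2⟩
        have hpar1 : (2:ℤ) ∣ ((n:ℤ) + (h-1)) := ⟨t-1, by omega⟩
        have hpar2 : (2:ℤ) ∣ ((n:ℤ) + (h+1)) := ⟨t, by omega⟩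
        have d0 : (((n+1:ℕ):ℤ) + h)/2 = t := by push_cast; omega
        have d1 : ((n:ℤ) + (h-1))/2 = t - 1 := by omega
        have d2 : ((n:ℤ) + (h+1))/2 = t := by omega
        have IH1 := IH (h-1) (by omega)
        have IH2 := IH (h+1) (by omega)
        have et : t - 1 + 1 = t := by ring
        have part1 : cnt (n+1) h = pf (n+1) h := by
          rw [cnt_succ h0, IH1.1, IH2.1, pf, pf, pf, if_pos hpar0, if_pos hpar1,
            if_pos hpar2, d0, d1, d2, et, ich_pascal n t, ich_pascal n (t+1)]
          have e2 : t + 1 - 1 = t := by ring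
          rw [e2]
          ring
        -- area part
        have f1 : ich (n+1) (t+1) = ich (n+1) ((n:ℤ) - t) := by
          rw [ich_symm (n+1) (t+1)]
          congr 1
          push_cast
          omega
        have f2 : ich (n+1) t = ich (n+1) ((n:ℤ) - t + 1) := by
          rw [ich_symm (n+1) t]
          congr 1
          push_cast
          omega
        have hat : (n:ℤ) - t + 1 ≤ t + 1 := by omega
        have hat2 : (n:ℤ) - t ≤ t + 1 := by omega
        -- S2 = sum over Icc (n-t) (t+1)
        have hS2a : ∑ s ∈ Finset.Icc ((n:ℤ) - t) (t+1), ich (n+1) s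
            = ich (n+1) ((n:ℤ) - t)
              + ∑ s ∈ Finset.Icc ((n:ℤ) - t + 1) (t+1), ich (n+1) s :=
          sum_ich_insert_left hat2
        have hS2b : ∑ s ∈ Finset.Icc ((n:ℤ) - t + 1) (t+1), ich (n+1) s
            = (∑ s ∈ Finset.Icc ((n:ℤ) - t + 1) t, ich (n+1) s) + ich (n+1) (t+1) := by
          have := sum_ich_insert_right (n := n+1) (a := (n:ℤ) - t + 1) (b := t+1) hat
          have e3 : t + 1 - 1 = t := by ring
          rw [e3] at this
          exact this
        have hS2c : ∑ s ∈ Finset.Icc ((n:ℤ) - t) t, ich (n+1) s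
            = (∑ s ∈ Finset.Icc ((n:ℤ) - t) (t+1), ich (n+1) s) - ich (n+1) (t+1) := by
          have := sum_ich_insert_right (n := n+1) (a := (n:ℤ) - t) (b := t+1)
            (by omega : (n:ℤ) - t ≤ t + 1)
          have e3 : t + 1 - 1 = t := by ring
          rw [e3] at this
          linarith
        have hS3 : ∑ s ∈ Finset.Icc ((n:ℤ) - t + 1) (t+1), ich (n+1+1) s
            = (∑ s ∈ Finset.Icc ((n:ℤ) - t + 1) (t+1), ich (n+1) s)
              + ∑ s ∈ Finset.Icc ((n:ℤ) - t) t, ich (n+1) s := by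
          have := sum_ich_pascal (n+1) ((n:ℤ) - t + 1) (t+1)
          have e4 : (n:ℤ) - t + 1 - 1 = (n:ℤ) - t := by ring
          have e3 : t + 1 - 1 = t := by ring
          rw [e4, e3] at this
          exact this
        have f5 : ich (n+1+1) ((n:ℤ) - t + 1)
            = ich (n+1) ((n:ℤ) - t + 1) + ich (n+1) ((n:ℤ) - t) := by
          have := ich_pascal (n+1) ((n:ℤ) - t + 1)
          have e4 : (n:ℤ) - t + 1 - 1 = (n:ℤ) - t := by ring
          rw [e4] at this
          exact this
        have hS1 : ∑ s ∈ Finset.Icc ((n:ℤ) - t + 1) t, ich (n+1) s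
            = (∑ s ∈ Finset.Icc ((n:ℤ) - t) (t+1), ich (n+1) s)
              - 2 * ich (n+1) ((n:ℤ) - t) := by
          have h1 := hS2a
          have h2 := hS2b
          have h3 := f1
          linarith
        have part2 : 2 * ar (n+1) h = qf2 (n+1) h := by
          have csum : cnt n (h-1) + cnt n (h+1) = pf (n+1) h := by
            rw [← cnt_succ h0, part1]
          have step1 : 2 * ar (n+1) h
              = qf2 n (h-1) + qf2 n (h+1) + 2*h*(pf (n+1) h) := by
            rw [ar_succ h0]
            linear_combination (IH1.2) + (IH2.2) + 2*h*csum
          rw [step1, pf, qf2, qf2, qf2, if_pos hpar0, if_pos hpar0, if_pos hpar1,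
            if_pos hpar2, d0, d1, d2, et]
          have r3 : ((n+1:ℕ):ℤ) - t = (n:ℤ) - t + 1 := by push_cast; ring
          rw [r3]
          have r4 : (n:ℤ) - (t - 1) = (n:ℤ) - t + 1 := by ring
          rw [r4]
          rw [hS3, hS2b, hS2c, hS1, f5, f1, f2]
          push_cast
          ring
        exact ⟨part1, part2⟩

end DyckAux

/-- The total area of all Dyck paths of length `2k` is `4^k − binom(2k+1, k)`. -/
theorem totalArea_closed_form (k : ℕ) :
    totalArea k = 4^k - (Nat.choose (2*k+1) k : ℤ) := by
  have hW : dyckSet k = DyckAux.W (2*k) 0 := by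
    rw [dyckSet, DyckAux.W]
    apply Finset.filter_congr
    intro f _
    unfold IsDyck
    exact Iff.rfl
  have hta : totalArea k = DyckAux.ar (2*k) 0 := by
    rw [totalArea, hW, DyckAux.ar]
  have hmain := (DyckAux.main (2*k) 0 (by norm_num)).2
  rw [← hta] at hmain
  have hq : DyckAux.qf2 (2*k) 0 = 2 * (4^k - (Nat.choose (2*k+1) k : ℤ)) := by
    rw [DyckAux.qf2, if_pos (by push_cast; omega : (2:ℤ) ∣ (((2*k:ℕ):ℤ) + 0))]
    have d : (((2*k:ℕ):ℤ) + 0)/2 = (k:ℤ) := by push_cast; omega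
    rw [d]
    have e1 : ((2*k:ℕ):ℤ) - k = (k:ℤ) := by push_cast; ring
    rw [e1]
    rw [DyckAux.sum_ich_insert_left (by omega : (k:ℤ) ≤ (k:ℤ)+1)]
    rw [Finset.Icc_self, Finset.sum_singleton]
    have i1 : DyckAux.ich (2*k+1) (k:ℤ) = (Nat.choose (2*k+1) k : ℤ) := by
      rw [DyckAux.ich, if_neg (by omega)]
      norm_num
    have i2 : DyckAux.ich (2*k+1) ((k:ℤ)+1) = (Nat.choose (2*k+1) k : ℤ) := by
      rw [DyckAux.ich, if_neg (by omega)]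
      have e3 : ((k:ℤ)+1).toNat = k+1 := by omega
      rw [e3, show k+1 = 2*k+1-k by omega, Nat.choose_symm (by omega)]
    rw [i1, i2]
    have e4 : (4:ℤ)^k = 2^(2*k) := by
      rw [show (4:ℤ) = 2^2 by norm_num, ← pow_mul]
    rw [e4]
    ring
  rw [hq] at hmain
  linarith
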